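/- Let E be a Banach space and 1 ≤ p, q < ∞. Every weakly q-summable sequence in E is mid (q,p)-summable if and only if every bounded linear operator from E into ℓ_p is absolutely q-summing. -/

import Mathlib

set_option maxHeartbeats 1000000


open NormedSpace MeasureTheory

noncomputable section

/-- A sequence `x` in `E` is weakly `p`-summable: `∑_j |φ(x_j)|^p < ∞` for all `φ ∈ E*`. -/
def WeaklySummable (𝕜 : Type*) [RCLike 𝕜] {E : Type*} [NormedAddCommGroup E]
    [NormedSpace 𝕜 E] (p : ℝ) (x : ℕ → E) : Prop :=
  ∀ φ : StrongDual 𝕜 E, Summable fun j => ‖φ (x j)‖ ^ p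

/-- The weak `p`-norm of a sequence: `sup_{φ ∈ B_{E*}} (∑_j |φ(x_j)|^p)^{1/p}`. -/
def weakNorm (𝕜 : Type*) [RCLike 𝕜] {E : Type*} [NormedAddCommGroup E]
    [NormedSpace 𝕜 E] (p : ℝ) (x : ℕ → E) : ℝ :=
  ⨆ φ : {φ : StrongDual 𝕜 E // ‖φ‖ ≤ 1}, (∑' j, ‖φ.1 (x j)‖ ^ p) ^ (1 / p)

/-- A sequence `x` in `E` is mid `(q,p)`-summable:
`∑_j (∑_n |x_n^*(x_j)|^p)^{q/p} < ∞` for every weakly `p`-summable sequence `(x_n^*)` in `E*`. -/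
def MidSummable (𝕜 : Type*) [RCLike 𝕜] {E : Type*} [NormedAddCommGroup E]
    [NormedSpace 𝕜 E] (q p : ℝ) (x : ℕ → E) : Prop :=
  ∀ xs : ℕ → StrongDual 𝕜 E, WeaklySummable 𝕜 p xs →
    Summable fun j => (∑' n, ‖xs n (x j)‖ ^ p) ^ (q / p)

/-- The mid `(q,p)`-norm:
`sup over (x_n^*) in the closed unit ball of ℓ_p^w(E*)` of
`(∑_j (∑_n |x_n^*(x_j)|^p)^{q/p})^{1/q}`. -/
def midNorm (𝕜 : Type*) [RCLike 𝕜] {E : Type*} [NormedAddCommGroup E]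
    [NormedSpace 𝕜 E] (q p : ℝ) (x : ℕ → E) : ℝ :=
  ⨆ xs : {xs : ℕ → StrongDual 𝕜 E // WeaklySummable 𝕜 p xs ∧ weakNorm 𝕜 p xs ≤ 1},
    (∑' j, (∑' n, ‖xs.1 n (x j)‖ ^ p) ^ (q / p)) ^ (1 / q)

/-- `u : X → Y` is absolutely `p`-summing: there is `C > 0` with
`(∑_{j=1}^k ‖u(x_j)‖^p)^{1/p} ≤ C sup_{φ ∈ B_{X*}} (∑_{j=1}^k |φ(x_j)|^p)^{1/p}`
for all finite families. -/
def AbsolutelySumming (𝕜 : Type*) [RCLike 𝕜] {X Y : Type*} [NormedAddCommGroup X]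
    [NormedSpace 𝕜 X] [NormedAddCommGroup Y] [NormedSpace 𝕜 Y] (p : ℝ)
    (u : X →L[𝕜] Y) : Prop :=
  ∃ C > 0, ∀ (k : ℕ) (z : Fin k → X),
    (∑ j, ‖u (z j)‖ ^ p) ^ (1 / p) ≤
      C * ⨆ φ : {φ : StrongDual 𝕜 X // ‖φ‖ ≤ 1}, (∑ j, ‖φ.1 (z j)‖ ^ p) ^ (1 / p)

/-- The `p`-summing norm `π_p(u)`: the least admissible constant. -/
def piNorm (𝕜 : Type*) [RCLike 𝕜] {X Y : Type*} [NormedAddCommGroup X]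
    [NormedSpace 𝕜 X] [NormedAddCommGroup Y] [NormedSpace 𝕜 Y] (p : ℝ)
    (u : X →L[𝕜] Y) : ℝ :=
  sInf {C : ℝ | 0 < C ∧ ∀ (k : ℕ) (z : Fin k → X),
    (∑ j, ‖u (z j)‖ ^ p) ^ (1 / p) ≤
      C * ⨆ φ : {φ : StrongDual 𝕜 X // ‖φ‖ ≤ 1}, (∑ j, ‖φ.1 (z j)‖ ^ p) ^ (1 / p)}

private lemma lp_single_add {𝕜 : Type*} [RCLike 𝕜] (P : ENNReal) (n : ℕ) (a b : 𝕜) :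
    lp.single (E := fun _ : ℕ => 𝕜) P n (a + b) =
      lp.single (E := fun _ : ℕ => 𝕜) P n a + lp.single (E := fun _ : ℕ => 𝕜) P n b := by
  apply lp.ext
  funext j
  rw [lp.coeFn_add, Pi.add_apply]
  by_cases hj : j = n
  · subst hj
    rw [lp.single_apply_self, lp.single_apply_self, lp.single_apply_self]
  · rw [lp.single_apply_ne _ _ _ hj, lp.single_apply_ne _ _ _ hj, lp.single_apply_ne _ _ _ hj,
      add_zero]

private lemma unifBound {𝕜 X : Type*} [RCLike 𝕜] [NormedAddCommGroup X] [NormedSpace 𝕜 X]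
    [CompleteSpace X] {r : ℝ} [Fact (1 ≤ ENNReal.ofReal r)] (hr : 1 ≤ r) (T : ℕ → X →L[𝕜] 𝕜)
    (h : ∀ x : X, Summable fun n => ‖T n x‖ ^ r) :
    ∃ C : ℝ, 0 ≤ C ∧ ∀ x : X, ∑' n, ‖T n x‖ ^ r ≤ C * ‖x‖ ^ r := by
  have hr0 : (0:ℝ) < r := lt_of_lt_of_le one_pos hr
  have htr : (ENNReal.ofReal r).toReal = r := ENNReal.toReal_ofReal hr0.le
  have htr0 : (0:ℝ) < (ENNReal.ofReal r).toReal := by rw [htr]; exact hr0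
  have hmk : ∀ N : ℕ, ∃ g : X →L[𝕜] lp (fun _ : ℕ => 𝕜) (ENNReal.ofReal r),
      ∀ x, ‖g x‖ ^ r = ∑ n ∈ Finset.range N, ‖T n x‖ ^ r := by
    intro N
    have key : ∀ x : X,
        ‖∑ n ∈ Finset.range N, lp.single (E := fun _ : ℕ => 𝕜) (ENNReal.ofReal r) n (T n x)‖ ^ r
          = ∑ n ∈ Finset.range N, ‖T n x‖ ^ r := by
      intro x
      have := lp.norm_sum_single (E := fun _ : ℕ => 𝕜) htr0 (fun n => T n x) (Finset.range N)
      rw [htr] at this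
      exact this
    refine ⟨LinearMap.mkContinuous
      { toFun := fun x => ∑ n ∈ Finset.range N, lp.single (E := fun _ : ℕ => 𝕜) (ENNReal.ofReal r) n (T n x)
        map_add' := fun x y => by
          simp only [map_add, lp_single_add, Finset.sum_add_distrib]
        map_smul' := fun c x => by
          simp only [_root_.map_smul, RingHom.id_apply, Finset.smul_sum]
          refine Finset.sum_congr rfl fun n _ => ?_
          exact lp.single_smul (E := fun _ : ℕ => 𝕜) (ENNReal.ofReal r) n c (T n x) }
      (∑ n ∈ Finset.range N, ‖T n‖) (fun x => ?_), fun x => by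
        rw [LinearMap.mkContinuous_apply]; exact key x⟩
    calc ‖∑ n ∈ Finset.range N, lp.single (E := fun _ : ℕ => 𝕜) (ENNReal.ofReal r) n (T n x)‖
        ≤ ∑ n ∈ Finset.range N, ‖lp.single (E := fun _ : ℕ => 𝕜) (ENNReal.ofReal r) n (T n x)‖ := norm_sum_le _ _
      _ = ∑ n ∈ Finset.range N, ‖T n x‖ := by
          refine Finset.sum_congr rfl fun n _ => ?_
          exact lp.norm_single (E := fun _ : ℕ => 𝕜) (ENNReal.ofReal_pos.mpr hr0) n (T n x)
      _ ≤ ∑ n ∈ Finset.range N, ‖T n‖ * ‖x‖ :=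
          Finset.sum_le_sum fun n _ => (T n).le_opNorm x
      _ = (∑ n ∈ Finset.range N, ‖T n‖) * ‖x‖ := by rw [Finset.sum_mul]
  choose g hg using hmk
  have hpt : ∀ x : X, ∃ C : ℝ, ∀ N : ℕ, ‖g N x‖ ≤ C := by
    intro x
    refine ⟨(∑' n, ‖T n x‖ ^ r) ^ r⁻¹, fun N => ?_⟩
    have h1 : ‖g N x‖ = (∑ n ∈ Finset.range N, ‖T n x‖ ^ r) ^ r⁻¹ := by
      rw [← hg N x, Real.rpow_rpow_inv (norm_nonneg _) hr0.ne']
    rw [h1]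
    refine Real.rpow_le_rpow (Finset.sum_nonneg fun n _ => Real.rpow_nonneg (norm_nonneg _) r)
      (Summable.sum_le_tsum _ (fun n _ => Real.rpow_nonneg (norm_nonneg _) r) (h x)) (inv_nonneg.mpr hr0.le)
  obtain ⟨C', hC'⟩ := banach_steinhaus hpt
  refine ⟨(max C' 0) ^ r, Real.rpow_nonneg (le_max_right _ _) r, fun x => ?_⟩
  refine Summable.tsum_le_of_sum_range_le (h x) fun N => ?_
  have h1 : ‖g N x‖ ≤ max C' 0 * ‖x‖ :=
    le_trans ((g N).le_opNorm x)
      (mul_le_mul_of_nonneg_right ((hC' N).trans (le_max_left C' 0)) (norm_nonneg x))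
  calc ∑ n ∈ Finset.range N, ‖T n x‖ ^ r = ‖g N x‖ ^ r := (hg N x).symm
    _ ≤ (max C' 0 * ‖x‖) ^ r := Real.rpow_le_rpow (norm_nonneg _) h1 hr0.le
    _ = (max C' 0) ^ r * ‖x‖ ^ r := Real.mul_rpow (le_max_right _ _) (norm_nonneg x)
private lemma mk_lp_clm {𝕜 X : Type*} [RCLike 𝕜] [NormedAddCommGroup X] [NormedSpace 𝕜 X]
    {r : ℝ} [Fact (1 ≤ ENNReal.ofReal r)] (hr : 1 ≤ r) (T : ℕ → X →L[𝕜] 𝕜)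
    (hsum : ∀ x : X, Summable fun n => ‖T n x‖ ^ r)
    {C : ℝ} (hC : 0 ≤ C) (hb : ∀ x : X, ∑' n, ‖T n x‖ ^ r ≤ C * ‖x‖ ^ r) :
    ∃ v : X →L[𝕜] lp (fun _ : ℕ => 𝕜) (ENNReal.ofReal r),
      ∀ (x : X) (n : ℕ), v x n = T n x := by
  have hr0 : (0:ℝ) < r := lt_of_lt_of_le one_pos hr
  have htr : (ENNReal.ofReal r).toReal = r := ENNReal.toReal_ofReal hr0.le
  have htr0 : (0:ℝ) < (ENNReal.ofReal r).toReal := by rw [htr]; exact hr0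
  have hmem : ∀ x : X, Memℓp (E := fun _ : ℕ => 𝕜) (fun n => T n x) (ENNReal.ofReal r) := by
    intro x
    apply memℓp_gen
    rw [htr]
    exact hsum x
  let L : X →ₗ[𝕜] lp (fun _ : ℕ => 𝕜) (ENNReal.ofReal r) :=
    { toFun := fun x => ⟨fun n => T n x, hmem x⟩
      map_add' := fun x y => by
        apply lp.ext
        funext n
        rw [lp.coeFn_add, Pi.add_apply]
        exact map_add (T n) x y
      map_smul' := fun c x => by
        apply lp.ext
        funext n
        rw [lp.coeFn_smul, Pi.smul_apply]
        exact (T n).map_smul c x }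
  have hLapp : ∀ (x : X) (n : ℕ), L x n = T n x := fun x n => rfl
  have hbnd : ∀ x : X, ‖L x‖ ≤ C ^ r⁻¹ * ‖x‖ := by
    intro x
    have h1 : ‖L x‖ = (∑' n, ‖T n x‖ ^ r) ^ (1 / r) := by
      have := lp.norm_eq_tsum_rpow htr0 (L x)
      rw [htr] at this
      simpa only [hLapp] using this
    rw [h1, one_div]
    calc (∑' n, ‖T n x‖ ^ r) ^ r⁻¹ ≤ (C * ‖x‖ ^ r) ^ r⁻¹ :=
          Real.rpow_le_rpow (tsum_nonneg fun n => Real.rpow_nonneg (norm_nonneg _) r) (hb x)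
            (inv_nonneg.mpr hr0.le)
      _ = C ^ r⁻¹ * (‖x‖ ^ r) ^ r⁻¹ := Real.mul_rpow hC (Real.rpow_nonneg (norm_nonneg _) r)
      _ = C ^ r⁻¹ * ‖x‖ := by rw [Real.rpow_rpow_inv (norm_nonneg _) hr0.ne']
  exact ⟨LinearMap.mkContinuous L (C ^ r⁻¹) hbnd, fun x n => rfl⟩

private def coordCLM {𝕜 : Type*} [RCLike 𝕜] (P : ENNReal) [Fact (1 ≤ P)] (n : ℕ) :
    lp (fun _ : ℕ => 𝕜) P →L[𝕜] 𝕜 :=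
  LinearMap.mkContinuous
    { toFun := fun f => f n
      map_add' := fun f g => by
        have := lp.coeFn_add f g
        simp only [funext_iff, Pi.add_apply] at this
        exact this n
      map_smul' := fun c f => by
        have := lp.coeFn_smul c f
        simp only [funext_iff, Pi.smul_apply] at this
        exact this n }
    1 (fun f => by
      rw [one_mul]
      exact lp.norm_apply_le_norm
        (ne_of_gt (lt_of_lt_of_le zero_lt_one (Fact.out : 1 ≤ P))) f n)

private lemma coordCLM_apply {𝕜 : Type*} [RCLike 𝕜] (P : ENNReal) [Fact (1 ≤ P)] (n : ℕ)
    (f : lp (fun _ : ℕ => 𝕜) P) : coordCLM P n f = f n := rfl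

private lemma dir2 {𝕜 E : Type*} [RCLike 𝕜] [NormedAddCommGroup E] [NormedSpace 𝕜 E]
    [CompleteSpace E] (p q : ℝ) (hp : 1 ≤ p) (hq : 1 ≤ q) [Fact (1 ≤ ENNReal.ofReal p)]
    (H : ∀ u : E →L[𝕜] lp (fun _ : ℕ => 𝕜) (ENNReal.ofReal p), AbsolutelySumming 𝕜 q u) :
    ∀ x : ℕ → E, WeaklySummable 𝕜 q x → MidSummable 𝕜 q p x := by
  intro x hx xs hxs
  have hp0 : (0:ℝ) < p := lt_of_lt_of_le one_pos hp
  have hq0 : (0:ℝ) < q := lt_of_lt_of_le one_pos hq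
  have htr : (ENNReal.ofReal p).toReal = p := ENNReal.toReal_ofReal hp0.le
  haveI : Nonempty {φ : StrongDual 𝕜 E // ‖φ‖ ≤ 1} := ⟨⟨0, by simp⟩⟩
  haveI : Fact (1 ≤ ENNReal.ofReal q) := ⟨ENNReal.one_le_ofReal.mpr hq⟩
  have hsum : ∀ e : E, Summable fun n => ‖xs n e‖ ^ p := by
    intro e
    have := hxs (inclusionInDoubleDual 𝕜 E e)
    simpa only [NormedSpace.dual_def] using this
  obtain ⟨C₁, hC₁0, hC₁⟩ := unifBound hp xs hsum
  obtain ⟨v, hv⟩ := mk_lp_clm hp xs hsum hC₁0 hC₁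
  obtain ⟨C, hCpos, hC⟩ := H v
  obtain ⟨C₂, hC₂0, hC₂⟩ := unifBound hq (fun j => inclusionInDoubleDual 𝕜 E (x j))
    (fun φ => by simpa only [NormedSpace.dual_def] using hx φ)
  have hC₂' : ∀ φ : StrongDual 𝕜 E, ∑' j, ‖φ (x j)‖ ^ q ≤ C₂ * ‖φ‖ ^ q := by
    intro φ
    have := hC₂ φ
    simpa only [NormedSpace.dual_def] using this
  have hkey : ∀ j : ℕ, (∑' n, ‖xs n (x j)‖ ^ p) ^ (q / p) = ‖v (x j)‖ ^ q := by
    intro j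
    have h1 : ‖v (x j)‖ ^ p = ∑' n, ‖xs n (x j)‖ ^ p := by
      have := lp.norm_rpow_eq_tsum (p := ENNReal.ofReal p) (by rw [htr]; exact hp0) (v (x j))
      rw [htr] at this
      simpa only [hv] using this
    have h2 : p * (q / p) = q := by field_simp
    rw [← h1, ← Real.rpow_mul (norm_nonneg _), h2]
  have hW : ∀ k : ℕ,
      (⨆ φ : {φ : StrongDual 𝕜 E // ‖φ‖ ≤ 1}, (∑ j : Fin k, ‖φ.1 (x (j:ℕ))‖ ^ q) ^ (1 / q))
        ≤ C₂ ^ (1 / q) := by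
    intro k
    refine ciSup_le fun φ => ?_
    have h1 : ∑ j : Fin k, ‖φ.1 (x (j:ℕ))‖ ^ q ≤ C₂ := by
      calc ∑ j : Fin k, ‖φ.1 (x (j:ℕ))‖ ^ q
          = ∑ j ∈ Finset.range k, ‖φ.1 (x j)‖ ^ q :=
            Fin.sum_univ_eq_sum_range (fun j => ‖φ.1 (x j)‖ ^ q) k
        _ ≤ ∑' j, ‖φ.1 (x j)‖ ^ q :=
            Summable.sum_le_tsum _ (fun j _ => Real.rpow_nonneg (norm_nonneg _) q) (hx φ.1)
        _ ≤ C₂ * ‖φ.1‖ ^ q := hC₂' φ.1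
        _ ≤ C₂ * 1 := by
            refine mul_le_mul_of_nonneg_left ?_ hC₂0
            exact Real.rpow_le_one (norm_nonneg _) φ.2 hq0.le
        _ = C₂ := mul_one C₂
    exact Real.rpow_le_rpow (Finset.sum_nonneg fun j _ => Real.rpow_nonneg (norm_nonneg _) q)
      h1 (by positivity)
  refine summable_of_sum_range_le (c := (C * C₂ ^ (1 / q)) ^ q)
    (fun j => Real.rpow_nonneg (tsum_nonneg fun n => Real.rpow_nonneg (norm_nonneg _) p) _)
    fun k => ?_
  have h2 := hC k (fun j => x (j : ℕ))
  have h3 : (∑ j : Fin k, ‖v (x (j:ℕ))‖ ^ q) ^ (1 / q) ≤ C * C₂ ^ (1 / q) :=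
    h2.trans (mul_le_mul_of_nonneg_left (hW k) hCpos.le)
  have hnn : (0:ℝ) ≤ ∑ j : Fin k, ‖v (x (j:ℕ))‖ ^ q :=
    Finset.sum_nonneg fun j _ => Real.rpow_nonneg (norm_nonneg _) q
  have h4 : ∑ j : Fin k, ‖v (x (j:ℕ))‖ ^ q ≤ (C * C₂ ^ (1 / q)) ^ q := by
    have h5 : ((∑ j : Fin k, ‖v (x (j:ℕ))‖ ^ q) ^ (1 / q)) ^ q
        = ∑ j : Fin k, ‖v (x (j:ℕ))‖ ^ q := by
      rw [one_div, Real.rpow_inv_rpow hnn hq0.ne']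
    calc ∑ j : Fin k, ‖v (x (j:ℕ))‖ ^ q
        = ((∑ j : Fin k, ‖v (x (j:ℕ))‖ ^ q) ^ (1 / q)) ^ q := h5.symm
      _ ≤ (C * C₂ ^ (1 / q)) ^ q :=
          Real.rpow_le_rpow (Real.rpow_nonneg hnn _) h3 hq0.le
  calc ∑ j ∈ Finset.range k, (∑' n, ‖xs n (x j)‖ ^ p) ^ (q / p)
      = ∑ j ∈ Finset.range k, ‖v (x j)‖ ^ q := by
        exact Finset.sum_congr rfl fun j _ => hkey j
    _ = ∑ j : Fin k, ‖v (x (j:ℕ))‖ ^ q :=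
        (Fin.sum_univ_eq_sum_range (fun j => ‖v (x j)‖ ^ q) k).symm
    _ ≤ (C * C₂ ^ (1 / q)) ^ q := h4

private lemma dual_coord_bound {𝕜 : Type*} [RCLike 𝕜] {p : ℝ} (hp : 1 ≤ p)
    [Fact (1 ≤ ENNReal.ofReal p)]
    (Ψ : (lp (fun _ : ℕ => 𝕜) (ENNReal.ofReal p) →L[𝕜] 𝕜) →L[𝕜] 𝕜) (N : ℕ) :
    ∑ n ∈ Finset.range N, ‖Ψ (coordCLM (ENNReal.ofReal p) n)‖ ^ p ≤ ‖Ψ‖ ^ p := by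
  have hp0 : (0:ℝ) < p := lt_of_lt_of_le one_pos hp
  have htr : (ENNReal.ofReal p).toReal = p := ENNReal.toReal_ofReal hp0.le
  have htr0 : (0:ℝ) < (ENNReal.ofReal p).toReal := by rw [htr]; exact hp0
  set a : ℕ → 𝕜 := fun n => Ψ (coordCLM (ENNReal.ofReal p) n) with ha
  set c : ℕ → 𝕜 := fun n =>
    if a n = 0 then 0 else (starRingEnd 𝕜) (a n) * (((‖a n‖ ^ (p - 2) : ℝ)) : 𝕜) with hc
  have hca : ∀ n, c n * a n = ((‖a n‖ ^ p : ℝ) : 𝕜) := by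
    intro n
    by_cases h0 : a n = 0
    · simp [hc, h0, Real.zero_rpow hp0.ne']
    · have hna : (0:ℝ) < ‖a n‖ := norm_pos_iff.mpr h0
      simp only [hc, if_neg h0]
      rw [mul_comm ((starRingEnd 𝕜) (a n)) _, mul_assoc, RCLike.conj_mul]
      rw [← RCLike.ofReal_pow, ← RCLike.ofReal_mul]
      congr 1
      rw [← Real.rpow_natCast (‖a n‖) 2, ← Real.rpow_add hna]
      norm_num
  have hcnorm : ∀ n, ‖c n‖ = if a n = 0 then 0 else ‖a n‖ ^ (p - 1) := by
    intro n
    by_cases h0 : a n = 0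
    · simp [hc, h0]
    · have hna : (0:ℝ) < ‖a n‖ := norm_pos_iff.mpr h0
      simp only [hc, if_neg h0]
      rw [norm_mul, RCLike.norm_conj, RCLike.norm_ofReal,
        abs_of_nonneg (Real.rpow_nonneg hna.le _)]
      rw [show p - 1 = 1 + (p - 2) by ring, Real.rpow_add hna, Real.rpow_one]
  set g : lp (fun _ : ℕ => 𝕜) (ENNReal.ofReal p) →L[𝕜] 𝕜 :=
    ∑ n ∈ Finset.range N, c n • coordCLM (ENNReal.ofReal p) n with hg
  set S : ℝ := ∑ n ∈ Finset.range N, ‖a n‖ ^ p with hS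
  have hS0 : 0 ≤ S := Finset.sum_nonneg fun n _ => Real.rpow_nonneg (norm_nonneg _) p
  have hPsig : Ψ g = ((S : ℝ) : 𝕜) := by
    rw [hg, map_sum, hS, RCLike.ofReal_sum]
    refine Finset.sum_congr rfl fun n _ => ?_
    rw [_root_.map_smul, smul_eq_mul]
    exact hca n
  have hSle : S ≤ ‖Ψ‖ * ‖g‖ := by
    have : ‖Ψ g‖ = S := by rw [hPsig, RCLike.norm_ofReal, abs_of_nonneg hS0]
    rw [← this]
    exact Ψ.le_opNorm g
  have hgapp : ∀ f : lp (fun _ : ℕ => 𝕜) (ENNReal.ofReal p),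
      g f = ∑ n ∈ Finset.range N, c n * f n := by
    intro f
    rw [hg, ContinuousLinearMap.sum_apply]
    refine Finset.sum_congr rfl fun n _ => ?_
    rw [ContinuousLinearMap.smul_apply, smul_eq_mul, coordCLM_apply]
  have hfsum : ∀ f : lp (fun _ : ℕ => 𝕜) (ENNReal.ofReal p),
      (∑ n ∈ Finset.range N, ‖(f : ∀ _ : ℕ, 𝕜) n‖ ^ p) ^ (1 / p) ≤ ‖f‖ := by
    intro f
    have h1 : ∑ n ∈ Finset.range N, ‖(f : ∀ _ : ℕ, 𝕜) n‖ ^ p ≤ ‖f‖ ^ p := by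
      have h2 := lp.norm_rpow_eq_tsum htr0 f
      rw [htr] at h2
      rw [h2]
      exact Summable.sum_le_tsum _ (fun n _ => Real.rpow_nonneg (norm_nonneg _) p)
        (by
          have := lp.hasSum_norm htr0 f
          rw [htr] at this
          exact this.summable)
    calc (∑ n ∈ Finset.range N, ‖(f : ∀ _ : ℕ, 𝕜) n‖ ^ p) ^ (1 / p)
        ≤ (‖f‖ ^ p) ^ (1 / p) := Real.rpow_le_rpow
          (Finset.sum_nonneg fun n _ => Real.rpow_nonneg (norm_nonneg _) p) h1 (by positivity)
      _ = ‖f‖ := by rw [one_div, Real.rpow_rpow_inv (norm_nonneg _) hp0.ne']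
  rcases eq_or_lt_of_le hp with hp1 | hp1
  · -- p = 1
    subst hp1
    have hgle : ‖g‖ ≤ 1 := by
      refine ContinuousLinearMap.opNorm_le_bound g zero_le_one fun f => ?_
      rw [hgapp f, one_mul]
      calc ‖∑ n ∈ Finset.range N, c n * (f : ∀ _ : ℕ, 𝕜) n‖
          ≤ ∑ n ∈ Finset.range N, ‖c n * (f : ∀ _ : ℕ, 𝕜) n‖ := norm_sum_le _ _
        _ ≤ ∑ n ∈ Finset.range N, ‖(f : ∀ _ : ℕ, 𝕜) n‖ := by
            refine Finset.sum_le_sum fun n _ => ?_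
            rw [norm_mul]
            by_cases h0 : a n = 0
            · simp [hcnorm n, h0]
            · refine mul_le_of_le_one_left (norm_nonneg _) ?_
              rw [hcnorm n, if_neg h0]
              simp
        _ = (∑ n ∈ Finset.range N, ‖(f : ∀ _ : ℕ, 𝕜) n‖ ^ (1:ℝ)) ^ (1 / (1:ℝ)) := by
            simp [Real.rpow_one]
        _ ≤ ‖f‖ := hfsum f
    calc S ≤ ‖Ψ‖ * ‖g‖ := hSle
      _ ≤ ‖Ψ‖ * 1 := mul_le_mul_of_nonneg_left hgle (ContinuousLinearMap.opNorm_nonneg Ψ)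
      _ = ‖Ψ‖ ^ (1:ℝ) := by rw [mul_one, Real.rpow_one]
  · -- 1 < p
    have hpq : p.HolderConjugate (Real.conjExponent p) := Real.HolderConjugate.conjExponent hp1
    set p' : ℝ := Real.conjExponent p with hp'
    have hp'0 : (0:ℝ) < p' := hpq.symm.pos
    have hcp : ∀ n, ‖c n‖ ^ p' = ‖a n‖ ^ p := by
      intro n
      by_cases h0 : a n = 0
      · simp [hcnorm n, h0, Real.zero_rpow hp'0.ne', Real.zero_rpow hp0.ne']
      · rw [hcnorm n, if_neg h0, ← Real.rpow_mul (norm_nonneg _)]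
        congr 1
        rw [hp', Real.conjExponent]
        have hne : p - 1 ≠ 0 := by linarith
        field_simp
    have hgle : ‖g‖ ≤ S ^ (1 / p') := by
      refine ContinuousLinearMap.opNorm_le_bound g
        (Real.rpow_nonneg hS0 _) fun f => ?_
      rw [hgapp f]
      calc ‖∑ n ∈ Finset.range N, c n * (f : ∀ _ : ℕ, 𝕜) n‖
          ≤ ∑ n ∈ Finset.range N, ‖c n‖ * ‖(f : ∀ _ : ℕ, 𝕜) n‖ := by
            refine (norm_sum_le _ _).trans ?_
            refine Finset.sum_le_sum fun n _ => ?_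
            rw [norm_mul]
        _ ≤ (∑ n ∈ Finset.range N, ‖c n‖ ^ p') ^ (1 / p') *
              (∑ n ∈ Finset.range N, ‖(f : ∀ _ : ℕ, 𝕜) n‖ ^ p) ^ (1 / p) :=
            Real.inner_le_Lp_mul_Lq_of_nonneg (s := Finset.range N) hpq.symm
              (fun n _ => norm_nonneg _) (fun n _ => norm_nonneg _)
        _ ≤ S ^ (1 / p') * ‖f‖ := by
            refine mul_le_mul ?_ (hfsum f) (Real.rpow_nonneg
              (Finset.sum_nonneg fun n _ => Real.rpow_nonneg (norm_nonneg _) p) _) ?_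
            · refine le_of_eq ?_
              congr 1
              exact Finset.sum_congr rfl fun n _ => hcp n
            · exact Real.rpow_nonneg hS0 _
    have hSle2 : S ≤ ‖Ψ‖ * S ^ (1 / p') :=
      hSle.trans (mul_le_mul_of_nonneg_left hgle (ContinuousLinearMap.opNorm_nonneg Ψ))
    rcases eq_or_lt_of_le hS0 with hS0' | hS0'
    · rw [← hS0']
      exact Real.rpow_nonneg (ContinuousLinearMap.opNorm_nonneg Ψ) p
    · have h6 : S ^ (1 / p) * S ^ (1 / p') = S := by
        rw [one_div, one_div, ← Real.rpow_add hS0', hpq.inv_add_inv_eq_one, Real.rpow_one]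
      have h7 : S ^ (1 / p) ≤ ‖Ψ‖ := by
        refine le_of_mul_le_mul_right ?_ (Real.rpow_pos_of_pos hS0' (1 / p'))
        rw [h6]
        exact hSle2
      calc S = (S ^ (1 / p)) ^ p := by rw [one_div, Real.rpow_inv_rpow hS0 hp0.ne']
        _ ≤ ‖Ψ‖ ^ p := Real.rpow_le_rpow (Real.rpow_nonneg hS0 _) h7 hp0.le

private lemma coordWeak {𝕜 E : Type*} [RCLike 𝕜] [NormedAddCommGroup E] [NormedSpace 𝕜 E]
    (p : ℝ) (hp : 1 ≤ p) [Fact (1 ≤ ENNReal.ofReal p)]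
    (u : E →L[𝕜] lp (fun _ : ℕ => 𝕜) (ENNReal.ofReal p)) :
    WeaklySummable 𝕜 p (fun n => (coordCLM (ENNReal.ofReal p) n).comp u) := by
  intro Φ
  have hp0 : (0:ℝ) < p := lt_of_lt_of_le one_pos hp
  set L : (lp (fun _ : ℕ => 𝕜) (ENNReal.ofReal p) →L[𝕜] 𝕜) →L[𝕜] (E →L[𝕜] 𝕜) :=
    (ContinuousLinearMap.compL 𝕜 E (lp (fun _ : ℕ => 𝕜) (ENNReal.ofReal p)) 𝕜).flip u with hL
  set Ψ : (lp (fun _ : ℕ => 𝕜) (ENNReal.ofReal p) →L[𝕜] 𝕜) →L[𝕜] 𝕜 := Φ.comp L with hPsi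
  have happ : ∀ n : ℕ, Φ ((coordCLM (ENNReal.ofReal p) n).comp u)
      = Ψ (coordCLM (ENNReal.ofReal p) n) := by
    intro n
    rw [hPsi, ContinuousLinearMap.comp_apply, hL]
    rfl
  refine summable_of_sum_range_le (c := ‖Ψ‖ ^ p)
    (fun n => Real.rpow_nonneg (norm_nonneg _) p) fun N => ?_
  calc ∑ n ∈ Finset.range N, ‖Φ ((coordCLM (ENNReal.ofReal p) n).comp u)‖ ^ p
      = ∑ n ∈ Finset.range N, ‖Ψ (coordCLM (ENNReal.ofReal p) n)‖ ^ p := by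
        refine Finset.sum_congr rfl fun n _ => ?_
        rw [happ n]
    _ ≤ ‖Ψ‖ ^ p := dual_coord_bound hp Ψ N

private lemma supFacts {𝕜 E : Type*} [RCLike 𝕜] [NormedAddCommGroup E] [NormedSpace 𝕜 E]
    (q : ℝ) (hq : 1 ≤ q) (k : ℕ) (z : Fin k → E) :
    (0 ≤ ⨆ φ : {φ : StrongDual 𝕜 E // ‖φ‖ ≤ 1}, (∑ j, ‖φ.1 (z j)‖ ^ q) ^ (1 / q)) ∧
      ∀ φ : StrongDual 𝕜 E, (∑ j, ‖φ (z j)‖ ^ q) ^ (1 / q) ≤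
        ‖φ‖ * ⨆ φ' : {φ : StrongDual 𝕜 E // ‖φ‖ ≤ 1}, (∑ j, ‖φ'.1 (z j)‖ ^ q) ^ (1 / q) := by
  have hq0 : (0:ℝ) < q := lt_of_lt_of_le one_pos hq
  haveI : Nonempty {φ : StrongDual 𝕜 E // ‖φ‖ ≤ 1} := ⟨⟨0, by simp⟩⟩
  have hbdd : BddAbove (Set.range fun φ : {φ : StrongDual 𝕜 E // ‖φ‖ ≤ 1} =>
      (∑ j, ‖φ.1 (z j)‖ ^ q) ^ (1 / q)) := by
    refine ⟨(∑ j, ‖z j‖ ^ q) ^ (1 / q), ?_⟩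
    rintro _ ⟨φ, rfl⟩
    refine Real.rpow_le_rpow
      (Finset.sum_nonneg fun j _ => Real.rpow_nonneg (norm_nonneg _) q)
      (Finset.sum_le_sum fun j _ => ?_) (by positivity)
    refine Real.rpow_le_rpow (norm_nonneg _) ?_ hq0.le
    calc ‖φ.1 (z j)‖ ≤ ‖φ.1‖ * ‖z j‖ := φ.1.le_opNorm (z j)
      _ ≤ 1 * ‖z j‖ := mul_le_mul_of_nonneg_right φ.2 (norm_nonneg _)
      _ = ‖z j‖ := one_mul _
  have h0 : 0 ≤ ⨆ φ : {φ : StrongDual 𝕜 E // ‖φ‖ ≤ 1}, (∑ j, ‖φ.1 (z j)‖ ^ q) ^ (1 / q) := by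
    refine le_trans ?_ (le_ciSup hbdd (⟨0, by simp⟩ : {φ : StrongDual 𝕜 E // ‖φ‖ ≤ 1}))
    exact Real.rpow_nonneg (Finset.sum_nonneg fun j _ => Real.rpow_nonneg (norm_nonneg _) q) _
  refine ⟨h0, fun φ => ?_⟩
  by_cases hφ : φ = 0
  · subst hφ
    simp only [ContinuousLinearMap.zero_apply, norm_zero, Real.zero_rpow hq0.ne',
      Finset.sum_const_zero, Real.zero_rpow (ne_of_gt (by positivity : (0:ℝ) < 1 / q)),
      norm_zero, zero_mul]
    exact le_refl 0
  · have ht : (0:ℝ) < ‖φ‖ := norm_pos_iff.mpr hφ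
    set ψ : StrongDual 𝕜 E := ((‖φ‖⁻¹ : ℝ) : 𝕜) • φ with hψ
    have hψn : ‖ψ‖ ≤ 1 := by
      rw [hψ, norm_smul, RCLike.norm_ofReal, abs_of_pos (inv_pos.mpr ht),
        inv_mul_cancel₀ ht.ne']
    have hle := le_ciSup hbdd (⟨ψ, hψn⟩ : {φ : StrongDual 𝕜 E // ‖φ‖ ≤ 1})
    have hval : (∑ j, ‖ψ (z j)‖ ^ q) ^ (1 / q)
        = ‖φ‖⁻¹ * (∑ j, ‖φ (z j)‖ ^ q) ^ (1 / q) := by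
      have h1 : ∀ j : Fin k, ‖ψ (z j)‖ ^ q = ‖φ‖⁻¹ ^ q * ‖φ (z j)‖ ^ q := by
        intro j
        rw [hψ, ContinuousLinearMap.smul_apply, norm_smul, RCLike.norm_ofReal,
          abs_of_pos (inv_pos.mpr ht), Real.mul_rpow (inv_pos.mpr ht).le (norm_nonneg _)]
      calc (∑ j, ‖ψ (z j)‖ ^ q) ^ (1 / q)
          = (‖φ‖⁻¹ ^ q * ∑ j, ‖φ (z j)‖ ^ q) ^ (1 / q) := by
            rw [Finset.mul_sum]
            congr 1
            exact Finset.sum_congr rfl fun j _ => h1 j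
        _ = ‖φ‖⁻¹ * (∑ j, ‖φ (z j)‖ ^ q) ^ (1 / q) := by
            rw [Real.mul_rpow (Real.rpow_nonneg (inv_pos.mpr ht).le q)
              (Finset.sum_nonneg fun j _ => Real.rpow_nonneg (norm_nonneg _) q),
              one_div, Real.rpow_rpow_inv (inv_pos.mpr ht).le hq0.ne']
    rw [hval] at hle
    calc (∑ j, ‖φ (z j)‖ ^ q) ^ (1 / q)
        = ‖φ‖ * (‖φ‖⁻¹ * (∑ j, ‖φ (z j)‖ ^ q) ^ (1 / q)) := by
          rw [← mul_assoc, mul_inv_cancel₀ ht.ne', one_mul]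
      _ ≤ ‖φ‖ * ⨆ φ' : {φ : StrongDual 𝕜 E // ‖φ‖ ≤ 1}, (∑ j, ‖φ'.1 (z j)‖ ^ q) ^ (1 / q) :=
          mul_le_mul_of_nonneg_left hle ht.le

private lemma dir1 {𝕜 E : Type*} [RCLike 𝕜] [NormedAddCommGroup E] [NormedSpace 𝕜 E]
    [CompleteSpace E] (p q : ℝ) (hp : 1 ≤ p) (hq : 1 ≤ q) [Fact (1 ≤ ENNReal.ofReal p)]
    (H : ∀ x : ℕ → E, WeaklySummable 𝕜 q x → MidSummable 𝕜 q p x)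
    (u : E →L[𝕜] lp (fun _ : ℕ => 𝕜) (ENNReal.ofReal p)) :
    AbsolutelySumming 𝕜 q u := by
  have hp0 : (0:ℝ) < p := lt_of_lt_of_le one_pos hp
  have hq0 : (0:ℝ) < q := lt_of_lt_of_le one_pos hq
  have htr : (ENNReal.ofReal p).toReal = p := ENNReal.toReal_ofReal hp0.le
  by_contra hcon
  rw [AbsolutelySumming] at hcon
  push_neg at hcon
  have key : ∀ m : ℕ, ∃ (k : ℕ) (y : Fin k → E),
      (∀ φ : StrongDual 𝕜 E, (∑ j, ‖φ (y j)‖ ^ q) ^ (1 / q) ≤ ‖φ‖ * (2⁻¹:ℝ) ^ m) ∧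
        (1:ℝ) ≤ ∑ j, ‖u (y j)‖ ^ q := by
    intro m
    obtain ⟨k, z, hz⟩ := hcon (2 * 2 ^ m) (by positivity)
    obtain ⟨hW0, hWle⟩ := supFacts (𝕜 := 𝕜) q hq k z
    set W : ℝ := ⨆ φ : {φ : StrongDual 𝕜 E // ‖φ‖ ≤ 1}, (∑ j, ‖φ.1 (z j)‖ ^ q) ^ (1 / q) with hWdef
    have hWpos : (0:ℝ) < W := by
      rcases lt_or_eq_of_le hW0 with h | h
      · exact h
      · exfalso
        have hzj : ∀ j, z j = 0 := by
          intro j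
          obtain ⟨g, hg1, hg2⟩ := exists_dual_vector'' 𝕜 (z j)
          have hz1 : ‖z j‖ = ‖g (z j)‖ := by
            rw [hg2, RCLike.norm_ofReal, abs_of_nonneg (norm_nonneg _)]
          have hz2 : ‖g (z j)‖ ≤ (∑ i, ‖g (z i)‖ ^ q) ^ (1 / q) := by
            calc ‖g (z j)‖ = (‖g (z j)‖ ^ q) ^ (1 / q) := by
                  rw [one_div, Real.rpow_rpow_inv (norm_nonneg _) hq0.ne']
              _ ≤ (∑ i, ‖g (z i)‖ ^ q) ^ (1 / q) :=
                  Real.rpow_le_rpow (Real.rpow_nonneg (norm_nonneg _) q)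
                    (Finset.single_le_sum (f := fun i => ‖g (z i)‖ ^ q)
                      (fun i _ => Real.rpow_nonneg (norm_nonneg _) q) (Finset.mem_univ j))
                    (by positivity)
          have hz3 : ‖z j‖ ≤ 0 := by
            rw [hz1]
            refine hz2.trans ((hWle g).trans ?_)
            rw [← h, mul_zero]
          exact norm_le_zero_iff.mp hz3
        have hzero : ∑ j, ‖u (z j)‖ ^ q = 0 := by
          refine Finset.sum_eq_zero fun j _ => ?_
          rw [hzj j, map_zero, norm_zero, Real.zero_rpow hq0.ne']
        rw [hzero, Real.zero_rpow (ne_of_gt (by positivity : (0:ℝ) < 1 / q)), ← h,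
          mul_zero] at hz
        exact lt_irrefl 0 hz
    set c0 : ℝ := (2⁻¹:ℝ) ^ m / W with hc0
    have hc0pos : (0:ℝ) < c0 := div_pos (by positivity) hWpos
    refine ⟨k, fun j => ((c0 : ℝ) : 𝕜) • z j, ?_, ?_⟩
    · intro φ
      have h1 : ∀ j : Fin k, ‖φ (((c0:ℝ):𝕜) • z j)‖ ^ q = c0 ^ q * ‖φ (z j)‖ ^ q := by
        intro j
        rw [_root_.map_smul, norm_smul, RCLike.norm_ofReal, abs_of_pos hc0pos,
          Real.mul_rpow hc0pos.le (norm_nonneg _)]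
      calc (∑ j, ‖φ (((c0:ℝ):𝕜) • z j)‖ ^ q) ^ (1 / q)
          = (c0 ^ q * ∑ j, ‖φ (z j)‖ ^ q) ^ (1 / q) := by
            rw [Finset.mul_sum]
            congr 1
            exact Finset.sum_congr rfl fun j _ => h1 j
        _ = c0 * (∑ j, ‖φ (z j)‖ ^ q) ^ (1 / q) := by
            rw [Real.mul_rpow (Real.rpow_nonneg hc0pos.le q)
              (Finset.sum_nonneg fun j _ => Real.rpow_nonneg (norm_nonneg _) q),
              one_div, Real.rpow_rpow_inv hc0pos.le hq0.ne']
        _ ≤ c0 * (‖φ‖ * W) := mul_le_mul_of_nonneg_left (hWle φ) hc0pos.le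
        _ = ‖φ‖ * (2⁻¹:ℝ) ^ m := by
            rw [hc0]
            field_simp
    · have h2 : ∀ j : Fin k, ‖u (((c0:ℝ):𝕜) • z j)‖ ^ q = c0 ^ q * ‖u (z j)‖ ^ q := by
        intro j
        rw [_root_.map_smul, norm_smul, RCLike.norm_ofReal, abs_of_pos hc0pos,
          Real.mul_rpow hc0pos.le (norm_nonneg _)]
      have h3 : (2 * 2 ^ m * W) ^ q < ∑ j, ‖u (z j)‖ ^ q := by
        have h4 : ((∑ j, ‖u (z j)‖ ^ q) ^ (1 / q)) ^ q = ∑ j, ‖u (z j)‖ ^ q := by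
          rw [one_div, Real.rpow_inv_rpow
            (Finset.sum_nonneg fun j _ => Real.rpow_nonneg (norm_nonneg _) q) hq0.ne']
        calc (2 * 2 ^ m * W) ^ q
            < ((∑ j, ‖u (z j)‖ ^ q) ^ (1 / q)) ^ q :=
              Real.rpow_lt_rpow (by positivity) hz hq0
          _ = ∑ j, ‖u (z j)‖ ^ q := h4
      calc (1:ℝ) ≤ 2 ^ q := Real.one_le_rpow one_le_two hq0.le
        _ = (c0 * (2 * 2 ^ m * W)) ^ q := by
            congr 1
            rw [hc0]
            field_simp
            ring
            rw [← mul_pow]; norm_num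
        _ = c0 ^ q * (2 * 2 ^ m * W) ^ q := Real.mul_rpow hc0pos.le (by positivity)
        _ ≤ c0 ^ q * ∑ j, ‖u (z j)‖ ^ q :=
            mul_le_mul_of_nonneg_left h3.le (Real.rpow_nonneg hc0pos.le q)
        _ = ∑ j, ‖u (((c0:ℝ):𝕜) • z j)‖ ^ q := by
            rw [Finset.mul_sum]
            exact (Finset.sum_congr rfl fun j _ => h2 j).symm
  choose k y h1 h2 using key
  have hk : ∀ m, 0 < k m := by
    intro m
    by_contra hk0
    push_neg at hk0
    have h6 : k m = 0 := Nat.le_zero.mp hk0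
    have h5 := h2 m
    haveI : IsEmpty (Fin (k m)) := by rw [h6]; infer_instance
    rw [Finset.univ_eq_empty, Finset.sum_empty] at h5
    linarith
  haveI : Infinite ((m : ℕ) × Fin (k m)) :=
    Infinite.of_injective (fun m => ⟨m, ⟨0, hk m⟩⟩) fun a b h => congrArg Sigma.fst h
  haveI := Denumerable.ofEncodableOfInfinite ((m : ℕ) × Fin (k m))
  let e : ℕ ≃ (m : ℕ) × Fin (k m) := (Denumerable.eqv _).symm
  set x : ℕ → E := fun j => y (e j).1 (e j).2 with hx
  have hxw : WeaklySummable 𝕜 q x := by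
    intro φ
    have hFs : Summable fun s : (m : ℕ) × Fin (k m) => ‖φ (y s.1 s.2)‖ ^ q := by
      refine (summable_sigma_of_nonneg fun s => Real.rpow_nonneg (norm_nonneg _) q).mpr
        ⟨fun m => Summable.of_finite, ?_⟩
      have hgeo : Summable fun m : ℕ => ‖φ‖ ^ q * ((2⁻¹:ℝ) ^ q) ^ m :=
        (summable_geometric_of_lt_one (by positivity)
          (Real.rpow_lt_one (by norm_num) (by norm_num) hq0)).mul_left _
      refine Summable.of_nonneg_of_le
        (fun m => tsum_nonneg fun i => Real.rpow_nonneg (norm_nonneg _) q)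
        (fun m => ?_) hgeo
      rw [tsum_fintype]
      have h5 := h1 m φ
      have h6 : ((∑ i, ‖φ (y m i)‖ ^ q) ^ (1 / q)) ^ q = ∑ i, ‖φ (y m i)‖ ^ q := by
        rw [one_div, Real.rpow_inv_rpow
          (Finset.sum_nonneg fun i _ => Real.rpow_nonneg (norm_nonneg _) q) hq0.ne']
      calc ∑ i, ‖φ (y m i)‖ ^ q
          = ((∑ i, ‖φ (y m i)‖ ^ q) ^ (1 / q)) ^ q := h6.symm
        _ ≤ (‖φ‖ * (2⁻¹:ℝ) ^ m) ^ q :=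
            Real.rpow_le_rpow (Real.rpow_nonneg
              (Finset.sum_nonneg fun i _ => Real.rpow_nonneg (norm_nonneg _) q) _) h5 hq0.le
        _ = ‖φ‖ ^ q * ((2⁻¹:ℝ) ^ q) ^ m := by
            rw [Real.mul_rpow (norm_nonneg _) (by positivity), ← Real.rpow_natCast (2⁻¹:ℝ) m,
              ← Real.rpow_mul (by norm_num : (0:ℝ) ≤ 2⁻¹), mul_comm (m:ℝ) q,
              Real.rpow_mul (by norm_num : (0:ℝ) ≤ 2⁻¹), Real.rpow_natCast]
    exact hFs.comp_injective e.injective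
  have hmid := H x hxw (fun n => (coordCLM (ENNReal.ofReal p) n).comp u) (coordWeak p hp u)
  have hnorm : ∀ j : ℕ,
      (∑' n, ‖((coordCLM (ENNReal.ofReal p) n).comp u) (x j)‖ ^ p) ^ (q / p)
        = ‖u (x j)‖ ^ q := by
    intro j
    have hco : ∀ n : ℕ, ((coordCLM (ENNReal.ofReal p) n).comp u) (x j)
        = (u (x j) : ∀ _ : ℕ, 𝕜) n := fun n => rfl
    have h5 : ‖u (x j)‖ ^ p = ∑' n, ‖(u (x j) : ∀ _ : ℕ, 𝕜) n‖ ^ p := by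
      have := lp.norm_rpow_eq_tsum (p := ENNReal.ofReal p) (by rw [htr]; exact hp0) (u (x j))
      rw [htr] at this
      exact this
    simp_rw [hco]
    rw [← h5, ← Real.rpow_mul (norm_nonneg _), show p * (q / p) = q by field_simp]
  have hsum2 : Summable fun j => ‖u (x j)‖ ^ q := by
    simp only [hnorm] at hmid
    exact hmid
  have hFs2 : Summable fun s : (m : ℕ) × Fin (k m) => ‖u (y s.1 s.2)‖ ^ q := by
    have h6 : (fun j => ‖u (x j)‖ ^ q)
        = (fun s : (m : ℕ) × Fin (k m) => ‖u (y s.1 s.2)‖ ^ q) ∘ e := rfl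
    rw [h6] at hsum2
    exact (Equiv.summable_iff e).mp hsum2
  have hfib := ((summable_sigma_of_nonneg
    fun s => Real.rpow_nonneg (norm_nonneg _) q).mp hFs2).2
  have hge : ∀ m, (1:ℝ) ≤ ∑' i : Fin (k m), ‖u (y m i)‖ ^ q := by
    intro m
    rw [tsum_fintype]
    exact h2 m
  obtain ⟨m, hm⟩ := (hfib.tendsto_atTop_zero.eventually_lt_const one_pos).exists
  exact absurd (hge m) (not_le.mpr hm)

variable {𝕜 E F : Type*}

/-- every weakly `q`-summable sequence in `E` is mid `(q,p)`-summable iff every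
bounded linear operator `E → ℓ_p` is absolutely `q`-summing. -/
theorem stmt4 [RCLike 𝕜] [NormedAddCommGroup E] [NormedSpace 𝕜 E] [CompleteSpace E]
    (p q : ℝ) (hp : 1 ≤ p) (hq : 1 ≤ q) [Fact (1 ≤ ENNReal.ofReal p)] :
    (∀ x : ℕ → E, WeaklySummable 𝕜 q x → MidSummable 𝕜 q p x) ↔
      ∀ u : E →L[𝕜] lp (fun _ : ℕ => 𝕜) (ENNReal.ofReal p), AbsolutelySumming 𝕜 q u := by
  constructor
  · intro H u
    exact dir1 p q hp hq H u
  · intro H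
    exact dir2 p q hp hq H
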